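/- Let ε ∈ ℂ* and γ : ℤ → ℂ. Suppose τ : ℤ × ℤ → ℂ is nowhere zero and satisfies the bilinear equation τ(l+2,m+1)·τ(l,m) − τ(l+2,m)·τ(l,m+1) − (γ(l)/ε^m)·τ(l+1,m+1)·τ(l+1,m) = 0 for all l,m. Then u(l,m) := τ(l,m)·τ(l+1,m+1)/(τ(l+1,m)·τ(l,m+1)) satisfies ε·u(l+1,m+1) − u(l,m) = ε/u(l,m+1) − 1/u(l+1,m). -/

import Mathlib

theorem stmt_2 (ε : ℂ) (hε : ε ≠ 0) (γ : ℤ → ℂ) (τ : ℤ × ℤ → ℂ)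
    (hnz : ∀ l m : ℤ, τ (l, m) ≠ 0)
    (hbil : ∀ l m : ℤ,
      τ (l + 2, m + 1) * τ (l, m) - τ (l + 2, m) * τ (l, m + 1)
        - (γ l / ε ^ m) * τ (l + 1, m + 1) * τ (l + 1, m) = 0)
    (u : ℤ × ℤ → ℂ)
    (hu : ∀ l m : ℤ,
      u (l, m) = τ (l, m) * τ (l + 1, m + 1) / (τ (l + 1, m) * τ (l, m + 1))) :
    ∀ l m : ℤ,
      ε * u (l + 1, m + 1) - u (l, m) = ε / u (l, m + 1) - 1 / u (l + 1, m) := by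
  intro l m
  have hεm : ε ^ m ≠ 0 := zpow_ne_zero _ hε
  have e1 : (l : ℤ) + 1 + 1 = l + 2 := by ring
  have e2 : (m : ℤ) + 1 + 1 = m + 2 := by ring
  have h1 := hbil l m
  have h2 := hbil l (m + 1)
  rw [e2, zpow_add_one₀ hε] at h2
  have H1 : τ (l + 2, m + 1) * τ (l, m) * ε ^ m - τ (l + 2, m) * τ (l, m + 1) * ε ^ m
      - γ l * τ (l + 1, m + 1) * τ (l + 1, m) = 0 := by
    have := h1
    field_simp at this
    linear_combination this
  have H2 : τ (l + 2, m + 2) * τ (l, m + 1) * (ε ^ m * ε) - τ (l + 2, m + 1) * τ (l, m + 2) * (ε ^ m * ε)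
      - γ l * τ (l + 1, m + 2) * τ (l + 1, m + 1) = 0 := by
    have := h2
    field_simp at this
    linear_combination this
  have hu1 := hu l m
  have hu2 := hu (l + 1) m
  have hu3 := hu l (m + 1)
  have hu4 := hu (l + 1) (m + 1)
  rw [e1] at hu2 hu4
  rw [e2] at hu3 hu4
  rw [hu1, hu2, hu3, hu4]
  have n1 := hnz l m
  have n2 := hnz (l + 1) m
  have n3 := hnz (l + 2) m
  have n4 := hnz l (m + 1)
  have n5 := hnz (l + 1) (m + 1)
  have n6 := hnz (l + 2) (m + 1)
  have n7 := hnz l (m + 2)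
  have n8 := hnz (l + 1) (m + 2)
  field_simp
  apply mul_right_cancel₀ hεm
  linear_combination
    (τ (l + 1, m) * H2 - τ (l + 1, m + 2) * H1)
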